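/- For a function g in the control class, the asymptotic variance of f + L g satisfies σ²_∞(f + L g) = 2π(f̂ (f - π(f))) - 4π(g (f - π(f))) + 2π(‖∇g‖²), where f̂ is the Poisson solution for f. Consequently minimizing g ↦ σ²_∞(f + L g) is equivalent to minimizing g ↦ -4π(g(f - π(f))) + 2π(‖∇g‖²), which does not involve f̂. -/
import Mathlib


open MeasureTheory Real
open scoped BigOperators RealInnerProductSpace

noncomputable section

abbrev Euc (d : ℕ) := EuclideanSpace ℝ (Fin d)

/-- Laplacian via the second iterated Fréchet derivative in coordinate directions. -/
def lapl {d : ℕ} (φ : Euc d → ℝ) (x : Euc d) : ℝ :=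
  ∑ i : Fin d, iteratedFDeriv ℝ 2 φ x ![EuclideanSpace.single i 1, EuclideanSpace.single i 1]

/-- The Langevin generator `L φ = -⟨∇U, ∇φ⟩ + Δφ`. -/
def gen {d : ℕ} (U φ : Euc d → ℝ) (x : Euc d) : ℝ :=
  - ⟪gradient U x, gradient φ x⟫ + lapl φ x

/-- The Gibbs probability measure `π(dx) ∝ e^{-U(x)} dx`. -/
def gibbs {d : ℕ} (U : Euc d → ℝ) : Measure (Euc d) :=
  ((∫⁻ x, ENNReal.ofReal (Real.exp (-U x)))⁻¹) •
    ((volume : Measure (Euc d)).withDensity fun x => ENNReal.ofReal (Real.exp (-U x)))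

/-- Polynomial growth of the `k`-th derivative. -/
def PolyGrowthD {d : ℕ} (k : ℕ) (f : Euc d → ℝ) : Prop :=
  ∃ (C : ℝ) (p : ℕ), ∀ x, ‖iteratedFDeriv ℝ k f x‖ ≤ C * (1 + ‖x‖) ^ p

theorem stmt_3 {d : ℕ} (U f g fhat : Euc d → ℝ)
    (hU : ContDiff ℝ (⊤ : ℕ∞) U) (hexp : Integrable fun x => Real.exp (-U x))
    (hf : ContDiff ℝ 2 f) (hg : ContDiff ℝ 2 g) (hfhat : ContDiff ℝ 2 fhat)
    (hfpg : ∀ k ≤ 2, PolyGrowthD k f) (hgpg : ∀ k ≤ 2, PolyGrowthD k g)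
    (hfhatpg : ∀ k ≤ 2, PolyGrowthD k fhat)
    (c : ℝ) (hc : c = ∫ y, f y ∂(gibbs U))
    (hPoisson : ∀ x, gen U fhat x = c - f x)
    (hLg0 : ∫ x, gen U g x ∂(gibbs U) = 0)
    (hsym : ∫ x, fhat x * gen U g x ∂(gibbs U) = ∫ x, g x * gen U fhat x ∂(gibbs U))
    (hgg : ∫ x, g x * gen U g x ∂(gibbs U) = - ∫ x, ‖gradient g x‖ ^ 2 ∂(gibbs U))
    (hintf : Integrable f (gibbs U))
    (hint1 : Integrable (fun x => fhat x * (f x - c)) (gibbs U))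
    (hint2 : Integrable (fun x => g x * (f x - c)) (gibbs U))
    (hint3 : Integrable (fun x => fhat x * gen U g x) (gibbs U))
    (hint4 : Integrable (fun x => g x * gen U g x) (gibbs U))
    (hint5 : Integrable (fun x => ‖gradient g x‖ ^ 2) (gibbs U))
    (hint6 : Integrable (fun x => gen U g x) (gibbs U)) :
    2 * ∫ x, (fhat x - g x) * ((f x + gen U g x) - ∫ y, (f y + gen U g y) ∂(gibbs U)) ∂(gibbs U)
      = 2 * ∫ x, fhat x * (f x - c) ∂(gibbs U)
        - 4 * ∫ x, g x * (f x - c) ∂(gibbs U)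
        + 2 * ∫ x, ‖gradient g x‖ ^ 2 ∂(gibbs U) := by
  have hmean : ∫ y, (f y + gen U g y) ∂(gibbs U) = c := by
    rw [integral_add hintf hint6, hLg0, hc, add_zero]
  rw [hmean]
  have hsplit : ∀ x, (fhat x - g x) * ((f x + gen U g x) - c)
      = (fhat x * (f x - c) + fhat x * gen U g x)
        - (g x * (f x - c) + g x * gen U g x) := by
    intro x; ring
  have hI : ∫ x, (fhat x - g x) * ((f x + gen U g x) - c) ∂(gibbs U)
      = (∫ x, fhat x * (f x - c) ∂(gibbs U) + ∫ x, fhat x * gen U g x ∂(gibbs U))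
        - (∫ x, g x * (f x - c) ∂(gibbs U) + ∫ x, g x * gen U g x ∂(gibbs U)) := by
    simp_rw [hsplit]
    exact (integral_sub (hint1.add hint3) (hint2.add hint4)).trans
      (by simp only [Pi.add_apply]; rw [integral_add hint1 hint3, integral_add hint2 hint4])
  have h2 : ∫ x, g x * gen U fhat x ∂(gibbs U) = - ∫ x, g x * (f x - c) ∂(gibbs U) := by
    rw [← integral_neg]
    congr 1
    funext x
    rw [hPoisson x]; ring
  rw [hI, hsym, h2, hgg]
  ring
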